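/- Every even perfect number other than 6 can be written as the sum of 5 cubes of natural numbers; that is, if N is an even perfect number with N ≠ 6, then there exist natural numbers a, b, c, d, e such that N = a³ + b³ + c³ + d³ + e³. -/

import Mathlib

namespace EvenPerfectCubes

namespace Nat

open ArithmeticFunction Finset
open scoped ArithmeticFunction.sigma

theorem sigma_two_pow_eq_mersenne_succ (k : ℕ) : σ 1 (2 ^ k) = mersenne (k + 1) := by
  simp_rw [sigma_one_apply, mersenne, show 2 = 1 + 1 from rfl, ← geom_sum_mul_add 1 (k + 1)]
  norm_num

theorem eq_two_pow_mul_odd {n : ℕ} (hpos : 0 < n) : ∃ k m : ℕ, n = 2 ^ k * m ∧ ¬Even m := by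
  have h := Nat.finiteMultiplicity_iff.2 ⟨Nat.prime_two.ne_one, hpos⟩
  cases' pow_multiplicity_dvd 2 n with m hm
  use multiplicity 2 n, m
  refine ⟨hm, ?_⟩
  rw [even_iff_two_dvd]
  have hg := h.not_pow_dvd_of_multiplicity_lt (Nat.lt_succ_self _)
  contrapose! hg
  rcases hg with ⟨k, rfl⟩
  apply Dvd.intro k
  rw [pow_succ, mul_assoc, ← hm]

/-- Euler's theorem that even perfect numbers can be factored as a
  power of two times a Mersenne prime. -/
theorem eq_two_pow_mul_prime_mersenne_of_even_perfect {n : ℕ} (ev : Even n) (perf : Nat.Perfect n) :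
    ∃ k : ℕ, Nat.Prime (mersenne (k + 1)) ∧ n = 2 ^ k * mersenne (k + 1) := by
  have hpos := perf.2
  rcases eq_two_pow_mul_odd hpos with ⟨k, m, rfl, hm⟩
  use k
  rw [even_iff_two_dvd] at hm
  rw [Nat.perfect_iff_sum_divisors_eq_two_mul hpos, ← sigma_one_apply,
    isMultiplicative_sigma.map_mul_of_coprime (Nat.prime_two.coprime_pow_of_not_dvd hm).symm,
    sigma_two_pow_eq_mersenne_succ, ← mul_assoc, ← pow_succ'] at perf
  obtain ⟨j, rfl⟩ := ((Odd.coprime_two_right (by simp)).pow_right _).dvd_of_dvd_mul_left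
    (Dvd.intro _ perf)
  rw [← mul_assoc, mul_comm _ (mersenne _), mul_assoc] at perf
  have h := mul_left_cancel₀ (by positivity) perf
  rw [sigma_one_apply, Nat.sum_divisors_eq_sum_properDivisors_add_self, ← succ_mersenne, add_mul,
    one_mul, add_comm] at h
  have hj := add_left_cancel h
  cases Nat.sum_properDivisors_dvd (by rw [hj]; apply Dvd.intro_left (mersenne (k + 1)) rfl) with
  | inl h_1 =>
    have j1 : j = 1 := Eq.trans hj.symm h_1
    rw [j1, mul_one, Nat.sum_properDivisors_eq_one_iff_prime] at h_1
    simp [h_1, j1]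
  | inr h_1 =>
    have jcon := Eq.trans hj.symm h_1
    rw [← one_mul j, ← mul_assoc, mul_one] at jcon
    have jcon2 := mul_right_cancel₀ ?_ jcon
    · exfalso
      match k with
      | 0 =>
        apply hm
        rw [← jcon2, pow_zero, one_mul, one_mul] at ev
        rw [← jcon2, one_mul]
        exact even_iff_two_dvd.mp ev
      | .succ k =>
        apply ne_of_lt _ jcon2
        rw [mersenne, ← Nat.pred_eq_sub_one, Nat.lt_pred_iff, ← pow_one (Nat.succ 1)]
        apply pow_lt_pow_right₀ (Nat.lt_succ_self 1) (Nat.succ_lt_succ k.succ_pos)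
    contrapose! hm
    simp [hm]

end Nat

/-- Cancellation step: if the five cubes plus `P` equal `2 * P ^ 2`,
then `P * (2 * P - 1)` equals the five cubes. -/
theorem main_step (P a b c d e : ℕ) (hP : 0 < P)
    (hid : a ^ 3 + b ^ 3 + c ^ 3 + d ^ 3 + e ^ 3 + P = 2 * P ^ 2) :
    P * (2 * P - 1) = a ^ 3 + b ^ 3 + c ^ 3 + d ^ 3 + e ^ 3 := by
  have h1 : P * (2 * P - 1) + P = 2 * P ^ 2 := by
    have h : 2 * P - 1 + 1 = 2 * P := by omega
    calc P * (2 * P - 1) + P = P * (2 * P - 1 + 1) := by ring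
      _ = P * (2 * P) := by rw [h]
      _ = 2 * P ^ 2 := by ring
  exact Nat.add_right_cancel (h1.trans hid.symm)

theorem identity0 (u : ℕ) :
    ((u + 2) ^ 2 * (u ^ 2 + 5 * u + 5)) ^ 3 + ((u + 2) ^ 2 * (u ^ 2 + 3 * u + 1)) ^ 3
      + ((u + 2) ^ 2) ^ 3 + 0 ^ 3 + 0 ^ 3 + (u + 2) ^ 6 = 2 * ((u + 2) ^ 6) ^ 2 := by
  ring

theorem identity1 (u : ℕ) :
    ((u + 2) ^ 2 * (2 * u ^ 2 + 10 * u + 11)) ^ 3 + ((u + 2) ^ 2 * (2 * u ^ 2 + 6 * u + 3)) ^ 3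
      + ((u + 2) ^ 2 * (2 * u ^ 2 + 8 * u + 7)) ^ 3 + ((u + 2) ^ 2 * (2 * u ^ 2 + 8 * u + 7)) ^ 3
      + 0 ^ 3 + 4 * (u + 2) ^ 6 = 2 * (4 * (u + 2) ^ 6) ^ 2 := by
  ring

theorem identity2 (u : ℕ) :
    (6 * (u + 2) ^ 4) ^ 3 + (6 * (u + 2) ^ 4) ^ 3
      + ((u + 2) ^ 2 * (2 * u ^ 2 + 10 * u + 10)) ^ 3
      + ((u + 2) ^ 2 * (2 * u ^ 2 + 6 * u + 2)) ^ 3 + (4 * (u + 2) ^ 4) ^ 3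
      + 16 * (u + 2) ^ 6 = 2 * (16 * (u + 2) ^ 6) ^ 2 := by
  ring

end EvenPerfectCubes

theorem even_perfect_sum_five_cubes (N : ℕ) (hperf : Nat.Perfect N)
    (heven : Even N) (hne : N ≠ 6) :
    ∃ a b c d e : ℕ, N = a ^ 3 + b ^ 3 + c ^ 3 + d ^ 3 + e ^ 3 := by
  obtain ⟨k, pr, hN⟩ :=
    EvenPerfectCubes.Nat.eq_two_pow_mul_prime_mersenne_of_even_perfect heven hperf
  rcases Nat.even_or_odd k with hk | hk
  · -- k even
    obtain ⟨K, rfl⟩ := hk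
    -- N = 2 ^ (K + K) * (2 * 2 ^ (K + K) - 1)
    have hNP : N = 2 ^ (K + K) * (2 * 2 ^ (K + K) - 1) := by
      rw [hN, mersenne, pow_succ, mul_comm (2 ^ (K + K)) 2]
    have hr : K % 3 = 0 ∨ K % 3 = 1 ∨ K % 3 = 2 := by omega
    set t := K / 3 with ht
    rcases hr with h | h | h
    · -- K = 3 * t
      rcases Nat.eq_zero_or_pos t with ht0 | ht1
      · -- K = 0, mersenne 1 = 1 is not prime
        exfalso
        have hK0 : K = 0 := by omega
        rw [hK0] at pr
        norm_num [mersenne] at pr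
      · obtain ⟨u, hw⟩ : ∃ u : ℕ, 2 ^ t = u + 2 := by
          have h2 : 2 ≤ 2 ^ t := by
            calc 2 = 2 ^ 1 := by norm_num
              _ ≤ 2 ^ t := Nat.pow_le_pow_right (by norm_num) ht1
          exact ⟨2 ^ t - 2, by omega⟩
        have hP : 2 ^ (K + K) = (u + 2) ^ 6 := by
          rw [show K + K = t * 6 by omega, pow_mul, hw]
        refine ⟨(u + 2) ^ 2 * (u ^ 2 + 5 * u + 5), (u + 2) ^ 2 * (u ^ 2 + 3 * u + 1),
          (u + 2) ^ 2, 0, 0, ?_⟩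
        rw [hNP, hP]
        exact EvenPerfectCubes.main_step ((u + 2) ^ 6) _ _ _ _ _ (by positivity) (EvenPerfectCubes.identity0 u)
    · -- K = 3 * t + 1
      rcases Nat.eq_zero_or_pos t with ht0 | ht1
      · -- K = 1, N = 28
        have hK1 : K = 1 := by omega
        refine ⟨3, 1, 0, 0, 0, ?_⟩
        rw [hNP, hK1]
        norm_num
      · obtain ⟨u, hw⟩ : ∃ u : ℕ, 2 ^ t = u + 2 := by
          have h2 : 2 ≤ 2 ^ t := by
            calc 2 = 2 ^ 1 := by norm_num
              _ ≤ 2 ^ t := Nat.pow_le_pow_right (by norm_num) ht1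
          exact ⟨2 ^ t - 2, by omega⟩
        have hP : 2 ^ (K + K) = 4 * (u + 2) ^ 6 := by
          rw [show K + K = t * 6 + 2 by omega, pow_add, pow_mul, hw]
          ring
        refine ⟨(u + 2) ^ 2 * (2 * u ^ 2 + 10 * u + 11),
          (u + 2) ^ 2 * (2 * u ^ 2 + 6 * u + 3),
          (u + 2) ^ 2 * (2 * u ^ 2 + 8 * u + 7),
          (u + 2) ^ 2 * (2 * u ^ 2 + 8 * u + 7), 0, ?_⟩
        rw [hNP, hP]
        exact EvenPerfectCubes.main_step (4 * (u + 2) ^ 6) _ _ _ _ _ (by positivity) (EvenPerfectCubes.identity1 u)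
    · -- K = 3 * t + 2
      rcases Nat.eq_zero_or_pos t with ht0 | ht1
      · -- K = 2, N = 496
        have hK2 : K = 2 := by omega
        refine ⟨6, 6, 4, 0, 0, ?_⟩
        rw [hNP, hK2]
        norm_num
      · obtain ⟨u, hw⟩ : ∃ u : ℕ, 2 ^ t = u + 2 := by
          have h2 : 2 ≤ 2 ^ t := by
            calc 2 = 2 ^ 1 := by norm_num
              _ ≤ 2 ^ t := Nat.pow_le_pow_right (by norm_num) ht1
          exact ⟨2 ^ t - 2, by omega⟩
        have hP : 2 ^ (K + K) = 16 * (u + 2) ^ 6 := by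
          rw [show K + K = t * 6 + 4 by omega, pow_add, pow_mul, hw]
          ring
        refine ⟨6 * (u + 2) ^ 4, 6 * (u + 2) ^ 4,
          (u + 2) ^ 2 * (2 * u ^ 2 + 10 * u + 10),
          (u + 2) ^ 2 * (2 * u ^ 2 + 6 * u + 2), 4 * (u + 2) ^ 4, ?_⟩
        rw [hNP, hP]
        exact EvenPerfectCubes.main_step (16 * (u + 2) ^ 6) _ _ _ _ _ (by positivity) (EvenPerfectCubes.identity2 u)
  · -- k odd : then N = 6, contradiction
    exfalso
    obtain ⟨m, rfl⟩ := hk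
    have hmod : (4 : ℕ) ^ (m + 1) ≡ 1 ^ (m + 1) [MOD 3] := Nat.ModEq.pow _ (by decide)
    have h1le : (1 : ℕ) ≤ 4 ^ (m + 1) := Nat.one_le_pow _ _ (by norm_num)
    have hmod' : (1 : ℕ) ≡ 4 ^ (m + 1) [MOD 3] := by simpa using hmod.symm
    have hdvd : 3 ∣ 4 ^ (m + 1) - 1 := (Nat.modEq_iff_dvd' h1le).mp hmod'
    have hmers : mersenne (2 * m + 1 + 1) = 4 ^ (m + 1) - 1 := by
      rw [mersenne, show 2 * m + 1 + 1 = 2 * (m + 1) by ring, pow_mul]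
      norm_num
    have hdvd' : 3 ∣ mersenne (2 * m + 1 + 1) := hmers ▸ hdvd
    rcases (Nat.Prime.eq_one_or_self_of_dvd pr 3 hdvd') with h3 | h3
    · omega
    · -- mersenne (2m+2) = 3 forces m = 0, so N = 6
      have hx : (2 : ℕ) ^ (2 * m + 1 + 1) - 1 = 3 := by
        rw [← mersenne]; exact h3.symm
      have h2 : (1 : ℕ) ≤ 2 ^ (2 * m + 1 + 1) := Nat.one_le_pow _ _ (by norm_num)
      have hpow : (2 : ℕ) ^ (2 * m + 1 + 1) = 2 ^ 2 := by
        have h4 := Nat.eq_add_of_sub_eq h2 hx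
        norm_num at h4
        rw [h4]; norm_num
      have hm0 : 2 * m + 1 + 1 = 2 := Nat.pow_right_injective (le_refl 2) hpow
      have hm : m = 0 := by omega
      apply hne
      rw [hN, hm0, hm]
      norm_num [mersenne]
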